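/- arXiv:1911.06575 — 2 statements merged into one kernel-verified Lean document; each statement's English description precedes it below -/
import Mathlib

section
/- For n ≥ 2 there is a chain of Lie subalgebras 𝔰𝔬(2n−1,ℂ) ⊂ 𝔰𝔬(2n,ℂ) ⊂ 𝔰𝔬(2n+1,ℂ) in which both 𝔰𝔬(2n−1,ℂ) (type B_{n−1}) and 𝔰𝔬(2n,ℂ) (type D_n) are regular subalgebras of 𝔰𝔬(2n+1,ℂ) (type B_n), but they are not normalized by one and the same Cartan subalgebra of 𝔰𝔬(2n+1,ℂ). -/
/-!
STATEMENT 5: For n ≥ 2 there is a chain of Lie subalgebras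
𝔰𝔬(2n−1,ℂ) ⊂ 𝔰𝔬(2n,ℂ) ⊂ 𝔰𝔬(2n+1,ℂ)
in which both 𝔰𝔬(2n−1,ℂ) (type B_{n−1}) and 𝔰𝔬(2n,ℂ) (type D_n) are regular subalgebras of
𝔰𝔬(2n+1,ℂ) (type B_n), but they are not normalized by one and the same Cartan subalgebra of
𝔰𝔬(2n+1,ℂ).

Here 𝔰𝔬(2n+1,ℂ) is realised as the skew matrices indexed by `(Fin (2n−1) ⊕ Fin 1) ⊕ Fin 1`,
and the standard embeddings are the block embeddings `A ↦ [[A, 0], [0, 0]]`.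
-/

open LieAlgebra Matrix
attribute [local instance 100] LieRing.ofAssociativeRing

set_option linter.unusedSectionVars false

section CartanPairing

variable {P I : Type*} [Fintype P] [DecidableEq P] [Fintype I] [DecidableEq I]

/-- Entry pattern of a "block rotation" Cartan element. -/
def gmat (t : P → ℂ) : P ⊕ (P ⊕ Unit) → P ⊕ (P ⊕ Unit) → ℂ
  | Sum.inl p, Sum.inr (Sum.inl q) => if p = q then t p else 0
  | Sum.inr (Sum.inl p), Sum.inl q => if p = q then -t p else 0
  | _, _ => 0

lemma gmat_col_l (t : P → ℂ) (u : P ⊕ (P ⊕ Unit)) (q : P) :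
    gmat t u (Sum.inl q) = if u = Sum.inr (Sum.inl q) then -t q else 0 := by
  rcases u with p | p | x
  · simp [gmat]
  · by_cases h : p = q
    · subst h; simp [gmat]
    · simp [gmat, h, Ne.symm h]
  · simp [gmat]

lemma gmat_col_r (t : P → ℂ) (u : P ⊕ (P ⊕ Unit)) (q : P) :
    gmat t u (Sum.inr (Sum.inl q)) = if u = Sum.inl q then t q else 0 := by
  rcases u with p | p | x
  · by_cases h : p = q
    · subst h; simp [gmat]
    · simp [gmat, h, Ne.symm h]
  · simp [gmat]
  · simp [gmat]

lemma gmat_col_f (t : P → ℂ) (u : P ⊕ (P ⊕ Unit)) (x : Unit) :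
    gmat t u (Sum.inr (Sum.inr x)) = 0 := by
  rcases u with p | p | y <;> simp [gmat]

lemma gmat_row_l (t : P → ℂ) (q : P) (v : P ⊕ (P ⊕ Unit)) :
    gmat t (Sum.inl q) v = if v = Sum.inr (Sum.inl q) then t q else 0 := by
  rcases v with p | p | x
  · simp [gmat]
  · by_cases h : p = q
    · subst h; simp [gmat]
    · simp [gmat, h, Ne.symm h]
  · simp [gmat]

lemma gmat_row_r (t : P → ℂ) (q : P) (v : P ⊕ (P ⊕ Unit)) :
    gmat t (Sum.inr (Sum.inl q)) v = if v = Sum.inl q then -t q else 0 := by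
  rcases v with p | p | x
  · by_cases h : p = q
    · subst h; simp [gmat]
    · simp [gmat, h, Ne.symm h]
  · simp [gmat]
  · simp [gmat]

lemma gmat_row_f (t : P → ℂ) (x : Unit) (v : P ⊕ (P ⊕ Unit)) :
    gmat t (Sum.inr (Sum.inr x)) v = 0 := by
  rcases v with p | p | y <;> simp [gmat]

lemma gmat_skew (t : P → ℂ) (u v : P ⊕ (P ⊕ Unit)) : gmat t v u = -gmat t u v := by
  rcases u with p | p | x <;> rcases v with q | q | y <;>
    first
      | (simp [gmat]; done)
      | (by_cases h : p = q
         · subst h; simp [gmat]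
         · simp [gmat, h, Ne.symm h])

lemma gmat_add (s t : P → ℂ) (u v : P ⊕ (P ⊕ Unit)) :
    gmat (s + t) u v = gmat s u v + gmat t u v := by
  rcases u with p | p | x <;> rcases v with q | q | y <;>
    first
      | (simp [gmat]; done)
      | (by_cases h : p = q
         · subst h; simp [gmat]; try ring
         · simp [gmat, h, Ne.symm h])

lemma gmat_smul (c : ℂ) (t : P → ℂ) (u v : P ⊕ (P ⊕ Unit)) :
    gmat (c • t) u v = c * gmat t u v := by
  rcases u with p | p | x <;> rcases v with q | q | y <;>
    first
      | (simp [gmat]; done)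
      | (by_cases h : p = q
         · subst h; simp [gmat]; try ring
         · simp [gmat, h, Ne.symm h])

lemma gmat_zero (u v : P ⊕ (P ⊕ Unit)) : gmat (0 : P → ℂ) u v = 0 := by
  rcases u with p | p | x <;> rcases v with q | q | y <;> simp [gmat]

variable (e : P ⊕ (P ⊕ Unit) ≃ I)

/-- first member of pair `p` -/
def pr0 (p : P) : I := e (Sum.inl p)
/-- second member of pair `p` -/
def pr1 (p : P) : I := e (Sum.inr (Sum.inl p))
/-- the fixed coordinate -/
def fpt : I := e (Sum.inr (Sum.inr ()))

/-- the Cartan element with rotation parameters `t`. -/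
def hmat (t : P → ℂ) : Matrix I I ℂ := Matrix.of fun i j => gmat t (e.symm i) (e.symm j)

lemma hmat_apply (t : P → ℂ) (i j : I) : hmat e t i j = gmat t (e.symm i) (e.symm j) := rfl

lemma hmat_skew (t : P → ℂ) : (hmat e t)ᵀ = -hmat e t := by
  ext i j
  simp only [transpose_apply, neg_apply, hmat_apply]
  exact gmat_skew t _ _

lemma hmat_mem_so (t : P → ℂ) : hmat e t ∈ Orthogonal.so I ℂ :=
  (Orthogonal.mem_so (n := I) (R := ℂ) _).mpr (hmat_skew e t)

lemma hmat_mul_apply (t : P → ℂ) (x : Matrix I I ℂ) (i b : I) :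
    (hmat e t * x) i b =
      Sum.elim (fun q => t q * x (pr1 e q) b)
        (Sum.elim (fun q => -t q * x (pr0 e q) b) fun _ => 0) (e.symm i) := by
  rw [Matrix.mul_apply]
  rcases h : e.symm i with q | q | u <;>
    simp only [hmat_apply, h, gmat_row_l, gmat_row_r, gmat_row_f, Sum.elim_inl, Sum.elim_inr,
      Equiv.symm_apply_eq, ite_mul, zero_mul] <;>
    simp [pr0, pr1, Finset.sum_ite_eq']

lemma mul_hmat_apply (t : P → ℂ) (x : Matrix I I ℂ) (a j : I) :
    (x * hmat e t) a j =
      Sum.elim (fun q => -t q * x a (pr1 e q))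
        (Sum.elim (fun q => t q * x a (pr0 e q)) fun _ => 0) (e.symm j) := by
  rw [Matrix.mul_apply]
  rcases h : e.symm j with q | q | u <;>
    simp only [hmat_apply, h, gmat_col_l, gmat_col_r, gmat_col_f, Sum.elim_inl, Sum.elim_inr,
      Equiv.symm_apply_eq, mul_ite, mul_zero] <;>
    simp [pr0, pr1, Finset.sum_ite_eq', mul_comm]

lemma hmat_mul_hmat_comm (s t : P → ℂ) : hmat e s * hmat e t = hmat e t * hmat e s := by
  ext i j
  rw [hmat_mul_apply, hmat_mul_apply]
  rcases h : e.symm i with q | q | u <;>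
    simp only [Sum.elim_inl, Sum.elim_inr, hmat_apply, pr0, pr1, Equiv.symm_apply_apply,
      gmat_row_l, gmat_row_r] <;> split <;> ring

lemma pr0_ne_pr1 (p q : P) : pr0 e p ≠ pr1 e q := by
  simp [pr0, pr1, e.injective.eq_iff]

lemma pr0_inj {p q : P} (h : pr0 e p = pr0 e q) : p = q := by
  simpa [pr0, e.injective.eq_iff] using h

lemma pr1_inj {p q : P} (h : pr1 e p = pr1 e q) : p = q := by
  simpa [pr1, e.injective.eq_iff] using h

lemma fpt_ne_pr0 (p : P) : fpt e ≠ pr0 e p := by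
  simp [pr0, fpt, e.injective.eq_iff]

lemma fpt_ne_pr1 (p : P) : fpt e ≠ pr1 e p := by
  simp [pr1, fpt, e.injective.eq_iff]

/-- The Cartan subalgebra of `so I ℂ` determined by a pairing `e` of the coordinates. -/
def cartanH : LieSubalgebra ℂ ↥(Orthogonal.so I ℂ) where
  carrier := {x | ∃ t : P → ℂ, (x : Matrix I I ℂ) = hmat e t}
  add_mem' := by
    rintro x y ⟨s, hs⟩ ⟨t, ht⟩
    refine ⟨s + t, ?_⟩
    ext i j
    simp [hs, ht, hmat_apply, gmat_add]
  zero_mem' := by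
    refine ⟨0, ?_⟩
    ext i j
    simp [hmat_apply, gmat_zero]
  smul_mem' := by
    rintro c x ⟨t, ht⟩
    refine ⟨c • t, ?_⟩
    have hcoe : ((c • x : ↥(Orthogonal.so I ℂ)) : Matrix I I ℂ) = c • (x : Matrix I I ℂ) := rfl
    rw [hcoe, ht]
    ext i j
    simp [hmat_apply, gmat_smul, Matrix.smul_apply, smul_eq_mul]
  lie_mem' := by
    rintro x y ⟨s, hs⟩ ⟨t, ht⟩
    refine ⟨0, ?_⟩
    have : ((⁅x, y⁆ : ↥(Orthogonal.so I ℂ)) : Matrix I I ℂ)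
        = ⁅(x : Matrix I I ℂ), (y : Matrix I I ℂ)⁆ := rfl
    rw [this, Ring.lie_def, hs, ht, hmat_mul_hmat_comm, sub_self]
    ext i j
    simp [hmat_apply, gmat_zero]

lemma mem_cartanH_iff (x : ↥(Orthogonal.so I ℂ)) :
    x ∈ cartanH e ↔ ∃ t : P → ℂ, (x : Matrix I I ℂ) = hmat e t := Iff.rfl

lemma skew_entries {x : ↥(Orthogonal.so I ℂ)} (i j : I) :
    (x : Matrix I I ℂ) i j = -(x : Matrix I I ℂ) j i := by
  have h := (Orthogonal.mem_so (n := I) (R := ℂ) _).mp x.2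
  have := congrFun (congrFun h j) i
  simpa [Matrix.transpose_apply] using this

lemma diag_zero_of_so {x : ↥(Orthogonal.so I ℂ)} (i : I) : (x : Matrix I I ℂ) i i = 0 := by
  have h := skew_entries (x := x) i i
  have h2 : (2 : ℂ) * (x : Matrix I I ℂ) i i = 0 := by linear_combination h
  simpa using h2

theorem cartanH_isCartan : (cartanH e).IsCartanSubalgebra := by
  constructor
  · -- nilpotent, since abelian
    have habel : IsLieAbelian ↥(cartanH e) := by
      constructor
      intro x y
      have hx := x.2
      have hy := y.2
      rw [mem_cartanH_iff] at hx hy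
      obtain ⟨s, hs⟩ := hx
      obtain ⟨t, ht⟩ := hy
      have hmatz : ⁅((x : ↥(Orthogonal.so I ℂ)) : Matrix I I ℂ),
          ((y : ↥(Orthogonal.so I ℂ)) : Matrix I I ℂ)⁆ = 0 := by
        rw [Ring.lie_def, hs, ht, hmat_mul_hmat_comm, sub_self]
      apply Subtype.ext
      apply Subtype.ext
      show ⁅((x : ↥(Orthogonal.so I ℂ)) : Matrix I I ℂ),
          ((y : ↥(Orthogonal.so I ℂ)) : Matrix I I ℂ)⁆ = (((0 : ↥(cartanH e)) :
          ↥(Orthogonal.so I ℂ)) : Matrix I I ℂ)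
      rw [hmatz]
      rfl
    infer_instance
  · -- self-normalizing
    refine le_antisymm ?_ (LieSubalgebra.le_normalizer _)
    intro x hx
    rw [LieSubalgebra.mem_normalizer_iff] at hx
    -- key fact: off-pair entries in pair columns vanish
    have hkey : ∀ (p : P) (c : I), c ≠ pr0 e p → c ≠ pr1 e p →
        (x : Matrix I I ℂ) c (pr0 e p) = 0 ∧ (x : Matrix I I ℂ) c (pr1 e p) = 0 := by
      intro p c hc0 hc1
      set y : ↥(Orthogonal.so I ℂ) := ⟨hmat e (Pi.single p 1), hmat_mem_so e _⟩ with hy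
      have hyH : y ∈ cartanH e := ⟨Pi.single p 1, rfl⟩
      obtain ⟨s, hs⟩ := hx y hyH
      have hs' : (x : Matrix I I ℂ) * hmat e (Pi.single p 1)
          - hmat e (Pi.single p 1) * (x : Matrix I I ℂ) = hmat e s := by
        have : ((⁅x, y⁆ : ↥(Orthogonal.so I ℂ)) : Matrix I I ℂ)
            = ⁅(x : Matrix I I ℂ), (y : Matrix I I ℂ)⁆ := rfl
        rw [this, Ring.lie_def] at hs
        simpa [hy] using hs
      constructor
      · -- entry at (c, pr1 p)
        have h1 := congrFun (congrFun hs' c) (pr1 e p)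
        rw [Matrix.sub_apply, mul_hmat_apply, hmat_mul_apply] at h1
        rw [hmat_apply] at h1
        have h2 : e.symm (pr1 e p) = Sum.inr (Sum.inl p) := by simp [pr1]
        rw [h2] at h1
        simp only [Sum.elim_inl, Sum.elim_inr, Pi.single_eq_same, gmat_col_r] at h1
        rcases hcc : e.symm c with q | q | u <;> rw [hcc] at h1 <;>
          simp only [Sum.elim_inl, Sum.elim_inr] at h1
        · have hqp : q ≠ p := by
            rintro rfl
            apply hc0
            rw [pr0, ← hcc, Equiv.apply_symm_apply]
          simpa [Pi.single_eq_of_ne hqp, hqp] using h1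
        · have hqp : q ≠ p := by
            rintro rfl
            apply hc1
            rw [pr1, ← hcc, Equiv.apply_symm_apply]
          simpa [Pi.single_eq_of_ne hqp, hqp] using h1
        · simpa using h1
      · -- entry at (c, pr0 p)
        have h1 := congrFun (congrFun hs' c) (pr0 e p)
        rw [Matrix.sub_apply, mul_hmat_apply, hmat_mul_apply] at h1
        rw [hmat_apply] at h1
        have h2 : e.symm (pr0 e p) = Sum.inl p := by simp [pr0]
        rw [h2] at h1
        simp only [Sum.elim_inl, Sum.elim_inr, Pi.single_eq_same, gmat_col_l] at h1
        rcases hcc : e.symm c with q | q | u <;> rw [hcc] at h1 <;>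
          simp only [Sum.elim_inl, Sum.elim_inr] at h1
        · have hqp : q ≠ p := by
            rintro rfl
            apply hc0
            rw [pr0, ← hcc, Equiv.apply_symm_apply]
          simpa [Pi.single_eq_of_ne hqp, hqp] using h1
        · have hqp : q ≠ p := by
            rintro rfl
            apply hc1
            rw [pr1, ← hcc, Equiv.apply_symm_apply]
          simpa [Pi.single_eq_of_ne hqp, hqp] using h1
        · simpa using h1
    -- now conclude x ∈ cartanH
    refine ⟨fun p => (x : Matrix I I ℂ) (pr0 e p) (pr1 e p), ?_⟩
    ext i j
    rw [hmat_apply]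
    rcases hi : e.symm i with p | p | u
    · have hi' : i = pr0 e p := by rw [pr0, ← hi, Equiv.apply_symm_apply]
      subst hi'
      rcases hj : e.symm j with q | q | v
      · have hj' : j = pr0 e q := by rw [pr0, ← hj, Equiv.apply_symm_apply]
        subst hj'
        simp only [gmat_col_l, reduceCtorEq, if_false]
        by_cases hpq : p = q
        · subst hpq; exact diag_zero_of_so _
        · exact (hkey q _ (fun hcon => hpq (pr0_inj e hcon)) (pr0_ne_pr1 e p q)).1
      · have hj' : j = pr1 e q := by rw [pr1, ← hj, Equiv.apply_symm_apply]
        subst hj'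
        simp only [gmat_col_r]
        by_cases hpq : p = q
        · subst hpq; simp
        · rw [if_neg (by simpa using hpq)]
          exact (hkey q _ (fun hcon => hpq (pr0_inj e hcon)) (pr0_ne_pr1 e p q)).2
      · have hj' : j = e (Sum.inr (Sum.inr v)) := by rw [← hj, Equiv.apply_symm_apply]
        subst hj'
        rw [gmat_col_f, skew_entries,
          (hkey p _ (by simp [pr0, e.injective.eq_iff]) (by simp [pr1, e.injective.eq_iff])).1,
          neg_zero]
    · have hi' : i = pr1 e p := by rw [pr1, ← hi, Equiv.apply_symm_apply]
      subst hi'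
      rcases hj : e.symm j with q | q | v
      · have hj' : j = pr0 e q := by rw [pr0, ← hj, Equiv.apply_symm_apply]
        subst hj'
        simp only [gmat_col_l, Sum.inr.injEq, Sum.inl.injEq]
        by_cases hpq : p = q
        · subst hpq
          rw [if_pos rfl, skew_entries]
        · rw [if_neg hpq]
          exact (hkey q _ (Ne.symm (pr0_ne_pr1 e q p)) (fun hcon => hpq (pr1_inj e hcon))).1
      · have hj' : j = pr1 e q := by rw [pr1, ← hj, Equiv.apply_symm_apply]
        subst hj'
        simp only [gmat_col_r, reduceCtorEq, if_false]
        by_cases hpq : p = q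
        · subst hpq; exact diag_zero_of_so _
        · exact (hkey q _ (Ne.symm (pr0_ne_pr1 e q p)) (fun hcon => hpq (pr1_inj e hcon))).2
      · have hj' : j = e (Sum.inr (Sum.inr v)) := by rw [← hj, Equiv.apply_symm_apply]
        subst hj'
        rw [gmat_col_f, skew_entries,
          (hkey p _ (by simp [pr0, e.injective.eq_iff]) (by simp [pr1, e.injective.eq_iff])).2,
          neg_zero]
    · have hi' : i = e (Sum.inr (Sum.inr u)) := by rw [← hi, Equiv.apply_symm_apply]
      subst hi'
      rcases hj : e.symm j with q | q | v
      · have hj' : j = pr0 e q := by rw [pr0, ← hj, Equiv.apply_symm_apply]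
        subst hj'
        simp only [gmat_col_l, reduceCtorEq, if_false]
        exact (hkey q _ (by simp [pr0, e.injective.eq_iff]) (by simp [pr1, e.injective.eq_iff])).1
      · have hj' : j = pr1 e q := by rw [pr1, ← hj, Equiv.apply_symm_apply]
        subst hj'
        simp only [gmat_col_r, reduceCtorEq, if_false]
        exact (hkey q _ (by simp [pr0, e.injective.eq_iff]) (by simp [pr1, e.injective.eq_iff])).2
      · have hj' : j = e (Sum.inr (Sum.inr v)) := by rw [← hj, Equiv.apply_symm_apply]
        subst hj'
        obtain rfl : u = v := Subsingleton.elim u v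
        rw [gmat_col_f]
        exact diag_zero_of_so _

end CartanPairing


/-- The standard block embedding of matrix Lie algebras, `A ↦ [[A, 0], [0, 0]]`. -/
def blockEmbed (m : Type*) [Fintype m] [DecidableEq m] :
    Matrix m m ℂ →ₗ⁅ℂ⁆ Matrix (m ⊕ Fin 1) (m ⊕ Fin 1) ℂ where
  toFun A := Matrix.fromBlocks A 0 0 0
  map_add' A B := by simp [Matrix.fromBlocks_add]
  map_smul' c A := by simp [Matrix.fromBlocks_smul]
  map_lie' {A B} := by
    simp only [Ring.lie_def, Matrix.fromBlocks_multiply, Matrix.mul_zero, Matrix.zero_mul,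
      add_zero, zero_add]
    rw [sub_eq_add_neg, sub_eq_add_neg, Matrix.fromBlocks_neg, Matrix.fromBlocks_add]
    simp

theorem blockEmbed_mem_so (m : Type*) [Fintype m] [DecidableEq m]
    (A : Matrix m m ℂ) (hA : A ∈ Orthogonal.so m ℂ) :
    blockEmbed m A ∈ Orthogonal.so (m ⊕ Fin 1) ℂ := by
  rw [Orthogonal.mem_so] at hA ⊢
  show (Matrix.fromBlocks A 0 0 0)ᵀ = -Matrix.fromBlocks A 0 0 0
  rw [Matrix.fromBlocks_transpose, hA, Matrix.fromBlocks_neg]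
  simp

/-- The standard embedding 𝔰𝔬(m,ℂ) → 𝔰𝔬(m+1,ℂ). -/
def soEmbed (m : Type*) [Fintype m] [DecidableEq m] :
    ↥(Orthogonal.so m ℂ) →ₗ⁅ℂ⁆ ↥(Orthogonal.so (m ⊕ Fin 1) ℂ) where
  toFun A := ⟨blockEmbed m (A : Matrix m m ℂ), blockEmbed_mem_so m _ A.2⟩
  map_add' A B := by
    ext : 1
    show blockEmbed m ((A : Matrix m m ℂ) + (B : Matrix m m ℂ)) = _
    exact map_add (blockEmbed m) _ _
  map_smul' c A := by
    ext : 1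
    show blockEmbed m (c • (A : Matrix m m ℂ)) = _
    exact map_smul (blockEmbed m) _ _
  map_lie' {A B} := by
    ext : 1
    show blockEmbed m ⁅(A : Matrix m m ℂ), (B : Matrix m m ℂ)⁆ = _
    rw [LieHom.map_lie]; rfl

-- ===== membership criteria for the two block subalgebras =====

section Embeddings

variable {m : Type*} [Fintype m] [DecidableEq m]

lemma soEmbed_coe (A : ↥(Orthogonal.so m ℂ)) :
    ((soEmbed m A : ↥(Orthogonal.so (m ⊕ Fin 1) ℂ)) : Matrix (m ⊕ Fin 1) (m ⊕ Fin 1) ℂ)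
      = Matrix.fromBlocks (A : Matrix m m ℂ) 0 0 0 := rfl

lemma mem_soEmbed_range_iff (x : ↥(Orthogonal.so (m ⊕ Fin 1) ℂ)) :
    x ∈ (soEmbed m).range ↔
      ∀ i, (x : Matrix (m ⊕ Fin 1) (m ⊕ Fin 1) ℂ) i (Sum.inr 0) = 0 := by
  constructor
  · rintro ⟨y, rfl⟩ i
    show (Matrix.fromBlocks (y : Matrix m m ℂ) 0 0 0) i (Sum.inr 0) = 0
    rcases i with k | u
    · simp
    · simp
  · intro h
    refine ⟨⟨Matrix.of fun k l =>
      (x : Matrix (m ⊕ Fin 1) (m ⊕ Fin 1) ℂ) (Sum.inl k) (Sum.inl l), ?_⟩, ?_⟩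
    · rw [Orthogonal.mem_so]
      ext k l
      simp only [Matrix.transpose_apply, Matrix.neg_apply, Matrix.of_apply]
      exact skew_entries (Sum.inl l) (Sum.inl k)
    · apply Subtype.ext
      show Matrix.fromBlocks _ 0 0 0 = (x : Matrix (m ⊕ Fin 1) (m ⊕ Fin 1) ℂ)
      ext i j
      rcases i with k | u <;> rcases j with l | v
      · rfl
      · obtain rfl : v = 0 := Subsingleton.elim v 0
        simp only [Matrix.fromBlocks_apply₁₂, Matrix.zero_apply]
        exact (h (Sum.inl k)).symm
      · obtain rfl : u = 0 := Subsingleton.elim u 0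
        simp only [Matrix.fromBlocks_apply₂₁, Matrix.zero_apply]
        rw [skew_entries (Sum.inr 0) (Sum.inl l), h (Sum.inl l), neg_zero]
      · obtain rfl : u = 0 := Subsingleton.elim u 0
        obtain rfl : v = 0 := Subsingleton.elim v 0
        simp only [Matrix.fromBlocks_apply₂₂, Matrix.zero_apply]
        exact (h (Sum.inr 0)).symm

lemma mem_soEmbed2_range_iff (x : ↥(Orthogonal.so ((m ⊕ Fin 1) ⊕ Fin 1) ℂ)) :
    x ∈ ((soEmbed (m ⊕ Fin 1)).comp (soEmbed m)).range ↔
      (∀ i, (x : Matrix ((m ⊕ Fin 1) ⊕ Fin 1) ((m ⊕ Fin 1) ⊕ Fin 1) ℂ) i (Sum.inr 0) = 0) ∧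
      (∀ i, (x : Matrix ((m ⊕ Fin 1) ⊕ Fin 1) ((m ⊕ Fin 1) ⊕ Fin 1) ℂ) i
        (Sum.inl (Sum.inr 0)) = 0) := by
  constructor
  · rintro ⟨y, hy⟩
    have hmx : Matrix.fromBlocks (Matrix.fromBlocks (y : Matrix m m ℂ) 0 0 0) 0 0 0
        = (x : Matrix ((m ⊕ Fin 1) ⊕ Fin 1) ((m ⊕ Fin 1) ⊕ Fin 1) ℂ) :=
      congrArg (fun z : ↥(Orthogonal.so ((m ⊕ Fin 1) ⊕ Fin 1) ℂ) =>
        (z : Matrix ((m ⊕ Fin 1) ⊕ Fin 1) ((m ⊕ Fin 1) ⊕ Fin 1) ℂ)) hy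
    constructor <;> intro i <;> rw [← hmx] <;> rcases i with (k | u) | u <;> simp
  · rintro ⟨h1, h2⟩
    refine ⟨⟨Matrix.of fun k l =>
      (x : Matrix ((m ⊕ Fin 1) ⊕ Fin 1) ((m ⊕ Fin 1) ⊕ Fin 1) ℂ)
        (Sum.inl (Sum.inl k)) (Sum.inl (Sum.inl l)), ?_⟩, ?_⟩
    · rw [Orthogonal.mem_so]
      ext k l
      simp only [Matrix.transpose_apply, Matrix.neg_apply, Matrix.of_apply]
      exact skew_entries (Sum.inl (Sum.inl l)) (Sum.inl (Sum.inl k))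
    · apply Subtype.ext
      show Matrix.fromBlocks (Matrix.fromBlocks _ 0 0 0) 0 0 0
        = (x : Matrix ((m ⊕ Fin 1) ⊕ Fin 1) ((m ⊕ Fin 1) ⊕ Fin 1) ℂ)
      ext i j
      rcases i with (k | u) | u <;> rcases j with (l | v) | v
      · rfl
      · obtain rfl : v = 0 := Subsingleton.elim v 0
        simpa using (h2 (Sum.inl (Sum.inl k))).symm
      · obtain rfl : v = 0 := Subsingleton.elim v 0
        simpa using (h1 (Sum.inl (Sum.inl k))).symm
      · obtain rfl : u = 0 := Subsingleton.elim u 0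
        simp only [Matrix.fromBlocks_apply₁₁, Matrix.fromBlocks_apply₂₁, Matrix.zero_apply]
        rw [skew_entries (Sum.inl (Sum.inr 0)) (Sum.inl (Sum.inl l)),
          h2 (Sum.inl (Sum.inl l)), neg_zero]
      · obtain rfl : u = 0 := Subsingleton.elim u 0
        obtain rfl : v = 0 := Subsingleton.elim v 0
        simpa using (h2 (Sum.inl (Sum.inr 0))).symm
      · obtain rfl : u = 0 := Subsingleton.elim u 0
        obtain rfl : v = 0 := Subsingleton.elim v 0
        simpa using (h1 (Sum.inl (Sum.inr 0))).symm
      · obtain rfl : u = 0 := Subsingleton.elim u 0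
        simp only [Matrix.fromBlocks_apply₂₁, Matrix.zero_apply]
        rw [skew_entries (Sum.inr 0) (Sum.inl (Sum.inl l)), h1 (Sum.inl (Sum.inl l)), neg_zero]
      · obtain rfl : u = 0 := Subsingleton.elim u 0
        obtain rfl : v = 0 := Subsingleton.elim v 0
        simp only [Matrix.fromBlocks_apply₂₂, Matrix.zero_apply]
        exact (h2 (Sum.inr 0)).symm
      · obtain rfl : u = 0 := Subsingleton.elim u 0
        obtain rfl : v = 0 := Subsingleton.elim v 0
        simpa using (h1 (Sum.inr 0)).symm

-- ===== anything normalizing the subalgebra `b` lies in `b` =====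

lemma mem_of_normalizes_b (hm : ∃ k' k : m, k' ≠ k)
    (x : ↥(Orthogonal.so (m ⊕ Fin 1) ℂ))
    (hx : ∀ y ∈ (soEmbed m).range, ⁅x, y⁆ ∈ (soEmbed m).range) :
    x ∈ (soEmbed m).range := by
  rw [mem_soEmbed_range_iff]
  intro i
  rcases i with k | u
  · -- use the rotation in coordinates k, k'
    obtain ⟨k', hk'⟩ : ∃ k', k' ≠ k := by
      obtain ⟨a, b, hab⟩ := hm
      by_cases hbk : b = k
      · exact ⟨a, hbk ▸ hab⟩
      · exact ⟨b, hbk⟩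
    set Y : Matrix (m ⊕ Fin 1) (m ⊕ Fin 1) ℂ :=
      Matrix.single (Sum.inl k) (Sum.inl k') 1
        - Matrix.single (Sum.inl k') (Sum.inl k) 1 with hY
    have hYso : Y ∈ Orthogonal.so (m ⊕ Fin 1) ℂ := by
      rw [Orthogonal.mem_so]
      ext i j
      simp [hY, Matrix.single, Matrix.transpose_apply, and_comm]
    have hYb : (⟨Y, hYso⟩ : ↥(Orthogonal.so (m ⊕ Fin 1) ℂ)) ∈ (soEmbed m).range := by
      rw [mem_soEmbed_range_iff]
      intro i
      simp [hY, Matrix.single]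
    have hbr := hx _ hYb
    rw [mem_soEmbed_range_iff] at hbr
    have h1 := hbr (Sum.inl k')
    have hcoe : ((⁅x, (⟨Y, hYso⟩ : ↥(Orthogonal.so (m ⊕ Fin 1) ℂ))⁆ :
        ↥(Orthogonal.so (m ⊕ Fin 1) ℂ)) : Matrix (m ⊕ Fin 1) (m ⊕ Fin 1) ℂ)
        = (x : Matrix (m ⊕ Fin 1) (m ⊕ Fin 1) ℂ) * Y
          - Y * (x : Matrix (m ⊕ Fin 1) (m ⊕ Fin 1) ℂ) := rfl
    rw [hcoe] at h1
    rw [Matrix.sub_apply, Matrix.mul_sub, Matrix.sub_mul] at h1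
    simp only [Matrix.sub_apply, hY] at h1
    rw [Matrix.mul_single_apply_of_ne (hbj := by simp), Matrix.mul_single_apply_of_ne (hbj := by simp),
      Matrix.single_mul_apply_of_ne (h := by simp [hk']), Matrix.single_mul_apply_same] at h1
    simpa using h1
  · obtain rfl : u = 0 := Subsingleton.elim u 0
    exact diag_zero_of_so _

-- ===== anything in `b` normalizing the subalgebra `a` lies in `a` =====

lemma mem_of_normalizes_a (hm : ∃ k' k : m, k' ≠ k)
    (x : ↥(Orthogonal.so ((m ⊕ Fin 1) ⊕ Fin 1) ℂ))
    (hxb : x ∈ (soEmbed (m ⊕ Fin 1)).range)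
    (hx : ∀ y ∈ ((soEmbed (m ⊕ Fin 1)).comp (soEmbed m)).range,
      ⁅x, y⁆ ∈ ((soEmbed (m ⊕ Fin 1)).comp (soEmbed m)).range) :
    x ∈ ((soEmbed (m ⊕ Fin 1)).comp (soEmbed m)).range := by
  rw [mem_soEmbed_range_iff] at hxb
  rw [mem_soEmbed2_range_iff]
  refine ⟨hxb, ?_⟩
  intro i
  rcases i with (k | u) | u
  · obtain ⟨k', hk'⟩ : ∃ k', k' ≠ k := by
      obtain ⟨a, b, hab⟩ := hm
      by_cases hbk : b = k
      · exact ⟨a, hbk ▸ hab⟩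
      · exact ⟨b, hbk⟩
    set Y : Matrix ((m ⊕ Fin 1) ⊕ Fin 1) ((m ⊕ Fin 1) ⊕ Fin 1) ℂ :=
      Matrix.single (Sum.inl (Sum.inl k)) (Sum.inl (Sum.inl k')) 1
        - Matrix.single (Sum.inl (Sum.inl k')) (Sum.inl (Sum.inl k)) 1 with hY
    have hYso : Y ∈ Orthogonal.so ((m ⊕ Fin 1) ⊕ Fin 1) ℂ := by
      rw [Orthogonal.mem_so]
      ext i j
      simp [hY, Matrix.single, Matrix.transpose_apply, and_comm]
    have hYa : (⟨Y, hYso⟩ : ↥(Orthogonal.so ((m ⊕ Fin 1) ⊕ Fin 1) ℂ)) ∈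
        ((soEmbed (m ⊕ Fin 1)).comp (soEmbed m)).range := by
      rw [mem_soEmbed2_range_iff]
      constructor <;> intro i <;> simp [hY, Matrix.single]
    have hbr := hx _ hYa
    rw [mem_soEmbed2_range_iff] at hbr
    have h1 := hbr.2 (Sum.inl (Sum.inl k'))
    have hcoe : ((⁅x, (⟨Y, hYso⟩ : ↥(Orthogonal.so ((m ⊕ Fin 1) ⊕ Fin 1) ℂ))⁆ :
        ↥(Orthogonal.so ((m ⊕ Fin 1) ⊕ Fin 1) ℂ)) :
          Matrix ((m ⊕ Fin 1) ⊕ Fin 1) ((m ⊕ Fin 1) ⊕ Fin 1) ℂ)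
        = (x : Matrix ((m ⊕ Fin 1) ⊕ Fin 1) ((m ⊕ Fin 1) ⊕ Fin 1) ℂ) * Y
          - Y * (x : Matrix ((m ⊕ Fin 1) ⊕ Fin 1) ((m ⊕ Fin 1) ⊕ Fin 1) ℂ) := rfl
    rw [hcoe] at h1
    rw [Matrix.sub_apply, Matrix.mul_sub, Matrix.sub_mul] at h1
    simp only [Matrix.sub_apply, hY] at h1
    rw [Matrix.mul_single_apply_of_ne (hbj := by simp), Matrix.mul_single_apply_of_ne (hbj := by simp),
      Matrix.single_mul_apply_of_ne (h := by simp [hk']), Matrix.single_mul_apply_same] at h1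
    simpa using h1
  · obtain rfl : u = 0 := Subsingleton.elim u 0
    exact diag_zero_of_so _
  · obtain rfl : u = 0 := Subsingleton.elim u 0
    rw [skew_entries (Sum.inr 0) (Sum.inl (Sum.inr 0)), hxb (Sum.inl (Sum.inr 0)), neg_zero]

end Embeddings


-- ===== the two pairing configurations =====

/-- Pairing normalizing 𝔰𝔬(2n−1): pairs (2p,2p+1) inside Fin (2n−1), the pair
(2n-th, (2n+1)-st) coordinate, with the (2n−1)-st coordinate fixed. -/
def pairFunA (n : ℕ) (hn : 2 ≤ n) :
    ((Fin (n - 1) ⊕ Unit) ⊕ ((Fin (n - 1) ⊕ Unit) ⊕ Unit)) →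
      ((Fin (2 * n - 1) ⊕ Fin 1) ⊕ Fin 1)
  | Sum.inl (Sum.inl p) => Sum.inl (Sum.inl ⟨2 * p.val, by have := p.isLt; omega⟩)
  | Sum.inl (Sum.inr _) => Sum.inl (Sum.inr 0)
  | Sum.inr (Sum.inl (Sum.inl p)) => Sum.inl (Sum.inl ⟨2 * p.val + 1, by have := p.isLt; omega⟩)
  | Sum.inr (Sum.inl (Sum.inr _)) => Sum.inr 0
  | Sum.inr (Sum.inr _) => Sum.inl (Sum.inl ⟨2 * n - 2, by omega⟩)

/-- Pairing normalizing 𝔰𝔬(2n): pairs (2p,2p+1) inside Fin (2n−1), the pair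
((2n−1)-st, 2n-th), with the last coordinate fixed. -/
def pairFunB (n : ℕ) (hn : 2 ≤ n) :
    ((Fin (n - 1) ⊕ Unit) ⊕ ((Fin (n - 1) ⊕ Unit) ⊕ Unit)) →
      ((Fin (2 * n - 1) ⊕ Fin 1) ⊕ Fin 1)
  | Sum.inl (Sum.inl p) => Sum.inl (Sum.inl ⟨2 * p.val, by have := p.isLt; omega⟩)
  | Sum.inl (Sum.inr _) => Sum.inl (Sum.inl ⟨2 * n - 2, by omega⟩)
  | Sum.inr (Sum.inl (Sum.inl p)) => Sum.inl (Sum.inl ⟨2 * p.val + 1, by have := p.isLt; omega⟩)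
  | Sum.inr (Sum.inl (Sum.inr _)) => Sum.inl (Sum.inr 0)
  | Sum.inr (Sum.inr _) => Sum.inr 0

lemma card_eq_aux (n : ℕ) (hn : 2 ≤ n) :
    Fintype.card ((Fin (n - 1) ⊕ Unit) ⊕ ((Fin (n - 1) ⊕ Unit) ⊕ Unit)) =
      Fintype.card ((Fin (2 * n - 1) ⊕ Fin 1) ⊕ Fin 1) := by
  simp only [Fintype.card_sum, Fintype.card_fin, Fintype.card_unit]
  omega

lemma pairFunA_bij (n : ℕ) (hn : 2 ≤ n) : Function.Bijective (pairFunA n hn) := by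
  rw [Fintype.bijective_iff_injective_and_card]
  refine ⟨?_, card_eq_aux n hn⟩
  intro u v h
  rcases u with (p | ⟨⟩) | ((p | ⟨⟩) | ⟨⟩) <;> rcases v with (q | ⟨⟩) | ((q | ⟨⟩) | ⟨⟩) <;>
    simp only [pairFunA, Sum.inl.injEq, Sum.inr.injEq, Fin.mk.injEq, reduceCtorEq] at h <;>
    first
      | rfl
      | (exact absurd h (by have := p.isLt; have := q.isLt; omega))
      | (exact absurd h (by have := p.isLt; omega))
      | (exact absurd h (by have := q.isLt; omega))
      | (obtain rfl : p = q := Fin.ext (by omega); rfl)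

lemma pairFunB_bij (n : ℕ) (hn : 2 ≤ n) : Function.Bijective (pairFunB n hn) := by
  rw [Fintype.bijective_iff_injective_and_card]
  refine ⟨?_, card_eq_aux n hn⟩
  intro u v h
  rcases u with (p | ⟨⟩) | ((p | ⟨⟩) | ⟨⟩) <;> rcases v with (q | ⟨⟩) | ((q | ⟨⟩) | ⟨⟩) <;>
    simp only [pairFunB, Sum.inl.injEq, Sum.inr.injEq, Fin.mk.injEq, reduceCtorEq] at h <;>
    first
      | rfl
      | (exact absurd h (by have := p.isLt; have := q.isLt; omega))
      | (exact absurd h (by have := p.isLt; omega))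
      | (exact absurd h (by have := q.isLt; omega))
      | (obtain rfl : p = q := Fin.ext (by omega); rfl)

/-- The pairing equivalence normalizing 𝔰𝔬(2n−1). -/
noncomputable def eA (n : ℕ) (hn : 2 ≤ n) :
    ((Fin (n - 1) ⊕ Unit) ⊕ ((Fin (n - 1) ⊕ Unit) ⊕ Unit)) ≃
      ((Fin (2 * n - 1) ⊕ Fin 1) ⊕ Fin 1) :=
  Equiv.ofBijective _ (pairFunA_bij n hn)

/-- The pairing equivalence normalizing 𝔰𝔬(2n). -/
noncomputable def eB (n : ℕ) (hn : 2 ≤ n) :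
    ((Fin (n - 1) ⊕ Unit) ⊕ ((Fin (n - 1) ⊕ Unit) ⊕ Unit)) ≃
      ((Fin (2 * n - 1) ⊕ Fin 1) ⊕ Fin 1) :=
  Equiv.ofBijective _ (pairFunB_bij n hn)

/-- A Lie subalgebra is *regular* if it is normalized by some Cartan subalgebra. -/
def LieSubalgebra.IsRegularSubalgebra {K L : Type*} [Field K] [LieRing L] [LieAlgebra K L]
    (r : LieSubalgebra K L) : Prop :=
  ∃ H : LieSubalgebra K L, H.IsCartanSubalgebra ∧ ∀ x ∈ H, ∀ y ∈ r, ⁅x, y⁆ ∈ r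

theorem soOdd_chain_regular_but_no_common_cartan (n : ℕ) (hn : 2 ≤ n) :
    -- the standard copy of 𝔰𝔬(2n−1,ℂ) inside 𝔰𝔬(2n+1,ℂ):
    letI a : LieSubalgebra ℂ ↥(Orthogonal.so ((Fin (2 * n - 1) ⊕ Fin 1) ⊕ Fin 1) ℂ) :=
      ((soEmbed (Fin (2 * n - 1) ⊕ Fin 1)).comp (soEmbed (Fin (2 * n - 1)))).range
    -- the standard copy of 𝔰𝔬(2n,ℂ) inside 𝔰𝔬(2n+1,ℂ):
    letI b : LieSubalgebra ℂ ↥(Orthogonal.so ((Fin (2 * n - 1) ⊕ Fin 1) ⊕ Fin 1) ℂ) :=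
      (soEmbed (Fin (2 * n - 1) ⊕ Fin 1)).range
    a ≤ b ∧
    a.IsRegularSubalgebra ∧
    b.IsRegularSubalgebra ∧
    ¬ ∃ H : LieSubalgebra ℂ ↥(Orthogonal.so ((Fin (2 * n - 1) ⊕ Fin 1) ⊕ Fin 1) ℂ),
        H.IsCartanSubalgebra ∧
        (∀ x ∈ H, ∀ y ∈ a, ⁅x, y⁆ ∈ a) ∧
        (∀ x ∈ H, ∀ y ∈ b, ⁅x, y⁆ ∈ b) := by
  have hm : ∃ k' k : Fin (2 * n - 1), k' ≠ k :=
    ⟨⟨0, by omega⟩, ⟨1, by omega⟩, by simp [Fin.ext_iff]⟩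
  have hm' : ∃ k' k : Fin (2 * n - 1) ⊕ Fin 1, k' ≠ k :=
    ⟨Sum.inl ⟨0, by omega⟩, Sum.inr 0, by simp⟩
  refine ⟨?_, ?_, ?_, ?_⟩
  · -- a ≤ b
    rintro x ⟨y, rfl⟩
    exact ⟨soEmbed _ y, rfl⟩
  · -- a is regular: normalized by the Cartan subalgebra of pairing `eA`
    refine ⟨cartanH (eA n hn), cartanH_isCartan _, ?_⟩
    intro x hx y hy
    obtain ⟨t, ht⟩ := hx
    rw [mem_soEmbed2_range_iff] at hy ⊢
    obtain ⟨hy1, hy2⟩ := hy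
    have hcoe : ((⁅x, y⁆ : ↥(Orthogonal.so ((Fin (2 * n - 1) ⊕ Fin 1) ⊕ Fin 1) ℂ)) :
        Matrix ((Fin (2 * n - 1) ⊕ Fin 1) ⊕ Fin 1) ((Fin (2 * n - 1) ⊕ Fin 1) ⊕ Fin 1) ℂ)
        = (x : Matrix ((Fin (2 * n - 1) ⊕ Fin 1) ⊕ Fin 1) ((Fin (2 * n - 1) ⊕ Fin 1) ⊕ Fin 1) ℂ)
            * (y : Matrix ((Fin (2 * n - 1) ⊕ Fin 1) ⊕ Fin 1) ((Fin (2 * n - 1) ⊕ Fin 1) ⊕ Fin 1) ℂ)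
          - (y : Matrix ((Fin (2 * n - 1) ⊕ Fin 1) ⊕ Fin 1) ((Fin (2 * n - 1) ⊕ Fin 1) ⊕ Fin 1) ℂ)
            * (x : Matrix ((Fin (2 * n - 1) ⊕ Fin 1) ⊕ Fin 1) ((Fin (2 * n - 1) ⊕ Fin 1) ⊕ Fin 1) ℂ)
        := rfl
    have hsymm1 : (eA n hn).symm (Sum.inr 0) = Sum.inr (Sum.inl (Sum.inr ())) := by
      rw [Equiv.symm_apply_eq]; rfl
    have hsymm2 : (eA n hn).symm (Sum.inl (Sum.inr 0)) = Sum.inl (Sum.inr ()) := by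
      rw [Equiv.symm_apply_eq]; rfl
    constructor <;> intro i
    · rw [hcoe, Matrix.sub_apply, ht, hmat_mul_apply, mul_hmat_apply, hsymm1]
      rcases hi : (eA n hn).symm i with q | q | u <;>
        simp [hy1, hy2, show pr0 (eA n hn) (Sum.inr ()) = Sum.inl (Sum.inr 0) from rfl]
    · rw [hcoe, Matrix.sub_apply, ht, hmat_mul_apply, mul_hmat_apply, hsymm2]
      rcases hi : (eA n hn).symm i with q | q | u <;>
        simp [hy1, hy2, show pr1 (eA n hn) (Sum.inr ()) = Sum.inr 0 from rfl]
  · -- b is regular: normalized by the Cartan subalgebra of pairing `eB`, which lies inside b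
    refine ⟨cartanH (eB n hn), cartanH_isCartan _, ?_⟩
    intro x hx y hy
    have hxb : x ∈ (soEmbed (Fin (2 * n - 1) ⊕ Fin 1)).range := by
      obtain ⟨t, ht⟩ := hx
      rw [mem_soEmbed_range_iff]
      intro i
      have hsymm : (eB n hn).symm (Sum.inr 0) = Sum.inr (Sum.inr ()) := by
        rw [Equiv.symm_apply_eq]; rfl
      rw [ht, hmat_apply, hsymm, gmat_col_f]
    exact LieSubalgebra.lie_mem _ hxb hy
  · -- no common Cartan subalgebra
    rintro ⟨H, hH, hHa, hHb⟩
    have hsubA : ∀ z ∈ H,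
        z ∈ ((soEmbed (Fin (2 * n - 1) ⊕ Fin 1)).comp (soEmbed (Fin (2 * n - 1)))).range :=
      fun z hz => mem_of_normalizes_a hm z (mem_of_normalizes_b hm' z (hHb z hz)) (hHa z hz)
    -- the rotation in the last two coordinates
    have hEso : (Matrix.single (Sum.inl (Sum.inr 0)) (Sum.inr 0) 1
        - Matrix.single (Sum.inr 0) (Sum.inl (Sum.inr 0)) 1 :
          Matrix ((Fin (2 * n - 1) ⊕ Fin 1) ⊕ Fin 1) ((Fin (2 * n - 1) ⊕ Fin 1) ⊕ Fin 1) ℂ)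
        ∈ Orthogonal.so ((Fin (2 * n - 1) ⊕ Fin 1) ⊕ Fin 1) ℂ := by
      rw [Orthogonal.mem_so]
      ext i j
      simp [Matrix.single, Matrix.transpose_apply, and_comm]
    set Eel : ↥(Orthogonal.so ((Fin (2 * n - 1) ⊕ Fin 1) ⊕ Fin 1) ℂ) := ⟨_, hEso⟩ with hEel
    have hEnorm : Eel ∈ H.normalizer := by
      rw [LieSubalgebra.mem_normalizer_iff]
      intro z hz
      have hza := hsubA z hz
      rw [mem_soEmbed2_range_iff] at hza
      obtain ⟨h1, h2⟩ := hza
      have hrow1 : ∀ j, (z : Matrix ((Fin (2 * n - 1) ⊕ Fin 1) ⊕ Fin 1)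
          ((Fin (2 * n - 1) ⊕ Fin 1) ⊕ Fin 1) ℂ) (Sum.inr 0) j = 0 := fun j => by
        rw [skew_entries, h1 j, neg_zero]
      have hrow2 : ∀ j, (z : Matrix ((Fin (2 * n - 1) ⊕ Fin 1) ⊕ Fin 1)
          ((Fin (2 * n - 1) ⊕ Fin 1) ⊕ Fin 1) ℂ) (Sum.inl (Sum.inr 0)) j = 0 := fun j => by
        rw [skew_entries, h2 j, neg_zero]
      have hzero : ⁅Eel, z⁆ = 0 := by
        apply Subtype.ext
        show (Eel : Matrix ((Fin (2 * n - 1) ⊕ Fin 1) ⊕ Fin 1)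
            ((Fin (2 * n - 1) ⊕ Fin 1) ⊕ Fin 1) ℂ) * (z : Matrix _ _ ℂ)
          - (z : Matrix _ _ ℂ) * (Eel : Matrix _ _ ℂ) = 0
        have hc1 : Matrix.single (Sum.inl (Sum.inr 0)) (Sum.inr 0) (1 : ℂ)
            * (z : Matrix ((Fin (2 * n - 1) ⊕ Fin 1) ⊕ Fin 1)
              ((Fin (2 * n - 1) ⊕ Fin 1) ⊕ Fin 1) ℂ) = 0 := by
          ext i j
          by_cases hi : i = Sum.inl (Sum.inr 0)
          · subst hi
            rw [Matrix.single_mul_apply_same, hrow1, mul_zero, Matrix.zero_apply]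
          · rw [Matrix.single_mul_apply_of_ne (h := hi), Matrix.zero_apply]
        have hc2 : Matrix.single (Sum.inr 0) (Sum.inl (Sum.inr 0)) (1 : ℂ)
            * (z : Matrix ((Fin (2 * n - 1) ⊕ Fin 1) ⊕ Fin 1)
              ((Fin (2 * n - 1) ⊕ Fin 1) ⊕ Fin 1) ℂ) = 0 := by
          ext i j
          by_cases hi : i = Sum.inr 0
          · subst hi
            rw [Matrix.single_mul_apply_same, hrow2, mul_zero, Matrix.zero_apply]
          · rw [Matrix.single_mul_apply_of_ne (h := hi), Matrix.zero_apply]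
        have hc3 : (z : Matrix ((Fin (2 * n - 1) ⊕ Fin 1) ⊕ Fin 1)
              ((Fin (2 * n - 1) ⊕ Fin 1) ⊕ Fin 1) ℂ)
            * Matrix.single (Sum.inl (Sum.inr 0)) (Sum.inr 0) (1 : ℂ) = 0 := by
          ext i j
          by_cases hj : j = Sum.inr 0
          · subst hj
            rw [Matrix.mul_single_apply_same, h2, zero_mul, Matrix.zero_apply]
          · rw [Matrix.mul_single_apply_of_ne (hbj := hj), Matrix.zero_apply]
        have hc4 : (z : Matrix ((Fin (2 * n - 1) ⊕ Fin 1) ⊕ Fin 1)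
              ((Fin (2 * n - 1) ⊕ Fin 1) ⊕ Fin 1) ℂ)
            * Matrix.single (Sum.inr 0) (Sum.inl (Sum.inr 0)) (1 : ℂ) = 0 := by
          ext i j
          by_cases hj : j = Sum.inl (Sum.inr 0)
          · subst hj
            rw [Matrix.mul_single_apply_same, h1, zero_mul, Matrix.zero_apply]
          · rw [Matrix.mul_single_apply_of_ne (hbj := hj), Matrix.zero_apply]
        have hEcoe : (Eel : Matrix ((Fin (2 * n - 1) ⊕ Fin 1) ⊕ Fin 1)
            ((Fin (2 * n - 1) ⊕ Fin 1) ⊕ Fin 1) ℂ)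
            = Matrix.single (Sum.inl (Sum.inr 0)) (Sum.inr 0) 1
              - Matrix.single (Sum.inr 0) (Sum.inl (Sum.inr 0)) 1 := rfl
        rw [hEcoe, Matrix.sub_mul, Matrix.mul_sub, hc1, hc2, hc3, hc4]
        simp
      rw [hzero]
      exact H.zero_mem
    rw [hH.self_normalizing] at hEnorm
    have hEa := hsubA Eel hEnorm
    rw [mem_soEmbed2_range_iff] at hEa
    have hfin := hEa.1 (Sum.inl (Sum.inr 0))
    have : (1 : ℂ) = 0 := by
      have hEcoe : (Eel : Matrix ((Fin (2 * n - 1) ⊕ Fin 1) ⊕ Fin 1)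
          ((Fin (2 * n - 1) ⊕ Fin 1) ⊕ Fin 1) ℂ) (Sum.inl (Sum.inr 0)) (Sum.inr 0)
          = 1 := by
        show ((Matrix.single (Sum.inl (Sum.inr 0)) (Sum.inr 0) (1:ℂ)
          - Matrix.single (Sum.inr 0) (Sum.inl (Sum.inr 0)) 1 :
            Matrix ((Fin (2 * n - 1) ⊕ Fin 1) ⊕ Fin 1) ((Fin (2 * n - 1) ⊕ Fin 1) ⊕ Fin 1) ℂ))
            (Sum.inl (Sum.inr 0)) (Sum.inr 0) = 1
        rw [Matrix.sub_apply, Matrix.single_apply_same,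
          Matrix.single_apply_of_ne (h := by simp)]
        ring
      rw [← hEcoe, hfin]
    norm_num at this
end

section
/- Let ε : 𝔤ᶜ → 𝔤̃ᶜ be an injective homomorphism of complex semisimple Lie algebras, 𝔤 a real form of 𝔤ᶜ with conjugation σ, 𝔲 a compact form of 𝔤ᶜ with conjugation τ satisfying στ = τσ, and θ = στ. Suppose 𝔲̃ is a compact form of 𝔤̃ᶜ with conjugation τ̃ and θ̃ is a ℂ-linear involution of 𝔤̃ᶜ such that ε(𝔲) ⊆ 𝔲̃, ε∘θ = θ̃∘ε, and θ̃∘τ̃ = τ̃∘θ̃. Then θ̃ leaves 𝔲̃ invariant, and setting 𝔨̃ = 𝔲̃₁ and 𝔭̃ = i·𝔲̃₋₁ (where 𝔲̃_k is the k-eigenspace of θ̃ on 𝔲̃), the real subspace 𝔤̃ = 𝔨̃ ⊕ 𝔭̃ is a real form of 𝔤̃ᶜ with ε(𝔤) ⊆ 𝔤̃. -/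
/-!
STATEMENT 16: Let ε : 𝔤ᶜ → 𝔤̃ᶜ be an injective homomorphism of complex semisimple Lie
algebras, 𝔤 a real form of 𝔤ᶜ with conjugation σ, 𝔲 a compact form with conjugation τ,
στ = τσ, θ = στ.  Suppose 𝔲̃ is a compact form of 𝔤̃ᶜ with conjugation τ̃ and θ̃ is a ℂ-linear
involution of 𝔤̃ᶜ with ε(𝔲) ⊆ 𝔲̃, ε∘θ = θ̃∘ε and θ̃∘τ̃ = τ̃∘θ̃.  Then θ̃ leaves 𝔲̃ invariant and,
setting 𝔨̃ = 𝔲̃₁, 𝔭̃ = i·𝔲̃₋₁, the real subspace 𝔤̃ = 𝔨̃ ⊕ 𝔭̃ is a real form of 𝔤̃ᶜ with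
ε(𝔤) ⊆ 𝔤̃.
-/

/-- An anti-involution (conjugation) of a complex Lie algebra; its fixed points form a
real form. -/
structure IsConjugation {L : Type*} [LieRing L] [LieAlgebra ℂ L] (σ : L → L) : Prop where
  map_add : ∀ x y, σ (x + y) = σ x + σ y
  map_smul : ∀ (c : ℂ) (x), σ (c • x) = (starRingEnd ℂ) c • σ x
  map_lie : ∀ x y, σ ⁅x, y⁆ = ⁅σ x, σ y⁆
  invol : ∀ x, σ (σ x) = x

/-- A conjugation is *compact* if the Killing form is negative definite on its fixed-point
real form. -/
def IsCompactConjugation {L : Type*} [LieRing L] [LieAlgebra ℂ L] (τ : L → L) : Prop :=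
  IsConjugation τ ∧ ∀ x, τ x = x → x ≠ 0 →
    (killingForm ℂ L x x).re < 0 ∧ (killingForm ℂ L x x).im = 0

theorem realForm_from_compatible_involution
    {L L' : Type*} [LieRing L] [LieAlgebra ℂ L] [FiniteDimensional ℂ L]
    [LieAlgebra.IsSemisimple ℂ L]
    [LieRing L'] [LieAlgebra ℂ L'] [FiniteDimensional ℂ L'] [LieAlgebra.IsSemisimple ℂ L']
    (ε : L →ₗ⁅ℂ⁆ L') (hε : Function.Injective ε)
    -- 𝔤 real form fixed by σ, 𝔲 compact form fixed by τ, στ = τσ, θ = στ: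
    (σ τ : L → L) (hσ : IsConjugation σ) (hτ : IsCompactConjugation τ)
    (hcomm : ∀ x, σ (τ x) = τ (σ x))
    -- 𝔲̃ compact form fixed by τ̃, θ̃ a ℂ-linear involution of 𝔤̃ᶜ:
    (τ' : L' → L') (hτ' : IsCompactConjugation τ')
    (θ' : L' →ₗ[ℂ] L') (hθ'lie : ∀ x y : L', θ' ⁅x, y⁆ = ⁅θ' x, θ' y⁆)
    (hθ'inv : ∀ x, θ' (θ' x) = x)
    -- (1) ε(𝔲) ⊆ 𝔲̃;  (2) ε∘θ = θ̃∘ε;  (3) θ̃∘τ̃ = τ̃∘θ̃: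
    (h1 : ∀ x, τ x = x → τ' (ε x) = ε x)
    (h2 : ∀ x, ε (σ (τ x)) = θ' (ε x))
    (h3 : ∀ x, θ' (τ' x) = τ' (θ' x)) :
    -- θ̃ leaves 𝔲̃ invariant:
    (∀ x, τ' x = x → τ' (θ' x) = θ' x) ∧
    -- 𝔤̃ := 𝔨̃ ⊕ 𝔭̃ = 𝔲̃₁ ⊕ i·𝔲̃₋₁ is a real form of 𝔤̃ᶜ containing ε(𝔤):
    (∃ σ' : L' → L', IsConjugation σ' ∧
      {z : L' | σ' z = z} =
        {z : L' | ∃ k p : L', τ' k = k ∧ θ' k = k ∧ τ' p = p ∧ θ' p = -p ∧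
          z = k + Complex.I • p} ∧
      ∀ x, σ x = x → ∃ k p : L', τ' k = k ∧ θ' k = k ∧ τ' p = p ∧ θ' p = -p ∧
        ε x = k + Complex.I • p) := by

  obtain ⟨hτ'c, _⟩ := hτ'
  obtain ⟨hτc, _⟩ := hτ
  have hconjI : (starRingEnd ℂ) Complex.I = -Complex.I := Complex.conj_I
  have hconj2 : (starRingEnd ℂ) (2:ℂ) = 2 := by
    rw [show (2:ℂ) = ((2:ℝ):ℂ) by norm_num, Complex.conj_ofReal]
  have hconjH : (starRingEnd ℂ) ((1:ℂ)/2) = 1/2 := by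
    rw [map_div₀, map_one, hconj2]
  have hconjmI : (starRingEnd ℂ) (-(Complex.I/2)) = Complex.I/2 := by
    rw [map_neg, map_div₀, Complex.conj_I, hconj2, neg_div, neg_neg]
  have hII : Complex.I * (-(Complex.I/2)) = 1/2 := by
    rw [mul_neg, ← mul_div_assoc, Complex.I_mul_I]; norm_num
  refine ⟨fun x hx => by rw [← h3, hx], ?_⟩
  refine ⟨fun z => θ' (τ' z), ?_, ?_, ?_⟩
  · constructor
    · intro x y; rw [hτ'c.map_add, map_add]
    · intro c x; rw [hτ'c.map_smul, map_smul]
    · intro x y; rw [hτ'c.map_lie, hθ'lie]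
    · intro x
      rw [h3, hθ'inv, hτ'c.invol]
  · ext z
    simp only [Set.mem_setOf_eq]
    constructor
    · intro hz
      have hτθ : τ' z = θ' z := by
        have h := congrArg θ' hz
        rwa [hθ'inv] at h
      refine ⟨((1:ℂ)/2) • (z + τ' z), (-(Complex.I/2)) • (z - τ' z), ?_, ?_, ?_, ?_, ?_⟩
      · rw [hτ'c.map_smul, hconjH, hτ'c.map_add, hτ'c.invol, add_comm]
      · rw [map_smul, map_add, hτθ, hθ'inv, ← hτθ, add_comm]
      · rw [hτ'c.map_smul, hconjmI]
        have : τ' (z - τ' z) = τ' z - z := by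
          have h := hτ'c.map_add (z - τ' z) (τ' z)
          rw [sub_add_cancel, hτ'c.invol] at h
          exact eq_sub_of_add_eq h.symm
        rw [this]; module
      · rw [map_smul, map_sub, hτθ, hθ'inv, ← hτθ]
        module
      · rw [smul_smul, hII]; module
    · rintro ⟨k, p, hk1, hk2, hp1, hp2, rfl⟩
      rw [hτ'c.map_add, hk1, hτ'c.map_smul, hconjI, hp1, map_add, hk2,
        map_smul, hp2]
      module
  · intro x hx
    have hτa : τ (((1:ℂ)/2) • (x + τ x)) = ((1:ℂ)/2) • (x + τ x) := by
      rw [hτc.map_smul, hconjH, hτc.map_add, hτc.invol, add_comm]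
    have hσa : σ (((1:ℂ)/2) • (x + τ x)) = ((1:ℂ)/2) • (x + τ x) := by
      rw [hσ.map_smul, hconjH, hσ.map_add, hx, hcomm, hx]
    have hτb : τ ((-(Complex.I/2)) • (x - τ x)) = (-(Complex.I/2)) • (x - τ x) := by
      rw [hτc.map_smul, hconjmI]
      have : τ (x - τ x) = τ x - x := by
        have h := hτc.map_add (x - τ x) (τ x)
        rw [sub_add_cancel, hτc.invol] at h
        exact eq_sub_of_add_eq h.symm
      rw [this]; module
    have hσb : σ ((-(Complex.I/2)) • (x - τ x)) = -((-(Complex.I/2)) • (x - τ x)) := by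
      rw [hσ.map_smul, hconjmI]
      have : σ (x - τ x) = x - τ x := by
        have h : σ (x - τ x) = σ x - σ (τ x) := by
          have h := hσ.map_add (x - τ x) (τ x)
          rw [sub_add_cancel] at h
          exact eq_sub_of_add_eq h.symm
        rw [h, hx, hcomm, hx]
      rw [this]; module
    refine ⟨ε (((1:ℂ)/2) • (x + τ x)), ε ((-(Complex.I/2)) • (x - τ x)),
      h1 _ hτa, ?_, h1 _ hτb, ?_, ?_⟩
    · rw [← h2, hτa, hσa]
    · rw [← h2, hτb, hσb, map_neg ε]
    · rw [← map_smul ε, ← map_add ε]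
      congr 1
      rw [smul_smul, hII]; module
end
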